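/- Let f = (f_1,…,f_n) be polynomials in R[x] with each deg f_i ≥ 1, δ_f = Σ_{i=1}^n (deg f_i − 1), and let δ_1, δ_2 ≥ 0 be integers. For i = 1,2 let L_i be an R-linear functional on R[x] that annuls (f)^{≤δ_f+δ_i}_x. Then for every polynomial F ∈ R[x] of total degree ≤ δ_f + δ_1 + δ_2 + 1, the value L_1(x_*).( L_2(y_*).det‖∇f(x,y) ∇F(x,y); f(x) F(x)‖ ) is independent of the choices of the monotonous difference derivatives ∇f_i of the f_i and of the monotonous difference derivative ∇F of F; i.e. any two such choices yield the same element of R. -/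

import Mathlib

open MvPolynomial Finset

noncomputable section

variable {R : Type*} [CommRing R] {n : ℕ}

/-- Total degree of a multivariate polynomial, valued in `WithBot ℤ`,
with the convention `deg 0 = ⊥` (i.e. `-∞`). -/
def mdeg {σ S : Type*} [CommSemiring S] (F : MvPolynomial σ S) : WithBot ℤ :=
  F.support.sup fun m => ((m.sum fun _ e => e : ℕ) : ℤ)

/-- The embedding `R[x] → R[x,y]`, `x_i ↦ x_i` (the x-variables are `Sum.inl`,
the y-variables are `Sum.inr`). -/
def toX : MvPolynomial (Fin n) R →ₐ[R] MvPolynomial (Fin n ⊕ Fin n) R :=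
  rename Sum.inl

/-- The embedding `R[x] → R[x,y]`, `x_i ↦ y_i`. -/
def toY : MvPolynomial (Fin n) R →ₐ[R] MvPolynomial (Fin n ⊕ Fin n) R :=
  rename Sum.inr

/-- `D = (∇¹F, …, ∇ⁿF)` is a difference derivative of `F`:
`∑ k, (x_k - y_k) * ∇ᵏF(x,y) = F(x) - F(y)`. -/
def IsDiffDeriv (F : MvPolynomial (Fin n) R)
    (D : Fin n → MvPolynomial (Fin n ⊕ Fin n) R) : Prop :=
  ∑ k : Fin n, (X (Sum.inl k) - X (Sum.inr k)) * D k = toX F - toY F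

/-- A difference derivative of `F` is monotonous if each component has total degree
`≤ deg F - 1` (equivalently `deg (∇ᵏF) + 1 ≤ deg F` in `WithBot ℤ`). -/
def IsMonotonous (F : MvPolynomial (Fin n) R)
    (D : Fin n → MvPolynomial (Fin n ⊕ Fin n) R) : Prop :=
  ∀ k, mdeg (D k) + 1 ≤ mdeg F

/-- `δ_f = ∑ᵢ (deg fᵢ - 1)`. -/
def deltaF (f : Fin n → MvPolynomial (Fin n) R) : ℤ :=
  ∑ i, (((f i).totalDegree : ℤ) - 1)

/-- `(f)^{≤ d}_x`: sums `∑ fᵢ gᵢ` with `deg fᵢ + deg gᵢ ≤ d` for every `i`. -/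
def boundedSpan (f : Fin n → MvPolynomial (Fin n) R) (d : WithBot ℤ) :
    Set (MvPolynomial (Fin n) R) :=
  {F | ∃ g : Fin n → MvPolynomial (Fin n) R,
    F = ∑ i, f i * g i ∧ ∀ i, mdeg (f i) + mdeg (g i) ≤ d}

/-- A linear functional `L` annuls a set `S` if it vanishes on it. -/
def Annuls (L : MvPolynomial (Fin n) R →ₗ[R] R) (S : Set (MvPolynomial (Fin n) R)) : Prop :=
  ∀ F ∈ S, L F = 0

/-- `L(y_*).P` : apply the functional `L` to the `y`-part of `P ∈ R[x,y]`,
i.e. if `P = ∑_α A_α(x) y^α` then `L(y_*).P = ∑_α L(y^α) • A_α(x)`. -/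
def applyY (L : MvPolynomial (Fin n) R →ₗ[R] R) (P : MvPolynomial (Fin n ⊕ Fin n) R) :
    MvPolynomial (Fin n) R :=
  ∑ m ∈ P.support,
    C (L (monomial (Finsupp.sumFinsuppAddEquivProdFinsupp m).2 (1 : R)) * P.coeff m) *
      monomial (Finsupp.sumFinsuppAddEquivProdFinsupp m).1 (1 : R)

/-- `det‖∇f(x,y) ∇F(x,y); f(x) F(x)‖` : the `(n+1) × (n+1)` determinant whose entry `(k,i)`
is `∇ᵏfᵢ(x,y)` for `k, i ≤ n`, entry `(k, n+1)` is `∇ᵏF(x,y)`, entry `(n+1, i)` is `fᵢ(x)`,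
and entry `(n+1, n+1)` is `F(x)`.  Here `Df i` is the tuple `(∇¹fᵢ, …, ∇ⁿfᵢ)`. -/
def ddetX (f : Fin n → MvPolynomial (Fin n) R)
    (Df : Fin n → Fin n → MvPolynomial (Fin n ⊕ Fin n) R)
    (F : MvPolynomial (Fin n) R) (DF : Fin n → MvPolynomial (Fin n ⊕ Fin n) R) :
    MvPolynomial (Fin n ⊕ Fin n) R :=
  Matrix.det (Matrix.of fun k i : Fin (n + 1) =>
    if hk : (k : ℕ) < n then
      if hi : (i : ℕ) < n then Df ⟨i, hi⟩ ⟨k, hk⟩ else DF ⟨k, hk⟩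
    else
      if hi : (i : ℕ) < n then toX (f ⟨i, hi⟩) else toX F)

/-- `det‖∇f(x,y) ∇F(x,y); f(y) F(y)‖` : as `ddetX` but with last row `(f₁(y),…,fₙ(y),F(y))`. -/
def ddetY (f : Fin n → MvPolynomial (Fin n) R)
    (Df : Fin n → Fin n → MvPolynomial (Fin n ⊕ Fin n) R)
    (F : MvPolynomial (Fin n) R) (DF : Fin n → MvPolynomial (Fin n ⊕ Fin n) R) :
    MvPolynomial (Fin n ⊕ Fin n) R :=
  Matrix.det (Matrix.of fun k i : Fin (n + 1) =>
    if hk : (k : ℕ) < n then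
      if hi : (i : ℕ) < n then Df ⟨i, hi⟩ ⟨k, hk⟩ else DF ⟨k, hk⟩
    else
      if hi : (i : ℕ) < n then toY (f ⟨i, hi⟩) else toY F)

section MdegAPI

variable {σ S : Type*} [CommSemiring S]

/-- weight of a monomial exponent -/
def wdeg (m : σ →₀ ℕ) : ℕ := m.sum fun _ e => e

lemma wdeg_add (a b : σ →₀ ℕ) : wdeg (a + b) = wdeg a + wdeg b := by
  classical
  unfold wdeg
  rw [Finsupp.sum_add_index] <;> intros <;> rfl

lemma wdeg_single (s : σ) (k : ℕ) : wdeg (Finsupp.single s k) = k := by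
  classical
  unfold wdeg
  rw [Finsupp.sum_single_index]; rfl

lemma mdeg_def (F : MvPolynomial σ S) :
    mdeg F = F.support.sup fun m => ((wdeg m : ℤ) : WithBot ℤ) := rfl

lemma le_mdeg {F : MvPolynomial σ S} {m : σ →₀ ℕ} (h : m ∈ F.support) :
    ((wdeg m : ℤ) : WithBot ℤ) ≤ mdeg F := Finset.le_sup (f := fun m => ((wdeg m : ℤ) : WithBot ℤ)) h

lemma mdeg_le_iff {F : MvPolynomial σ S} {d : WithBot ℤ} :
    mdeg F ≤ d ↔ ∀ m ∈ F.support, ((wdeg m : ℤ) : WithBot ℤ) ≤ d := Finset.sup_le_iff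

@[simp] lemma mdeg_zero : mdeg (0 : MvPolynomial σ S) = ⊥ := by
  simp [mdeg_def]

lemma mdeg_le_totalDegree (F : MvPolynomial σ S) :
    mdeg F ≤ ((F.totalDegree : ℤ) : WithBot ℤ) := by
  rw [mdeg_le_iff]
  intro m hm
  have : wdeg m ≤ F.totalDegree := Finset.le_sup (f := fun m => m.sum fun _ e => e) hm
  exact_mod_cast this

lemma mdeg_eq_totalDegree {F : MvPolynomial σ S} (h : F ≠ 0) :
    mdeg F = ((F.totalDegree : ℤ) : WithBot ℤ) := by
  refine le_antisymm (mdeg_le_totalDegree F) ?_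
  obtain ⟨m, hm, hms⟩ := Finset.exists_mem_eq_sup F.support
    (MvPolynomial.support_nonempty.2 h) (fun m => m.sum fun _ e => e)
  have : F.totalDegree = wdeg m := hms
  rw [this]
  exact le_mdeg hm

lemma mdeg_monomial_le (m : σ →₀ ℕ) (c : S) :
    mdeg (MvPolynomial.monomial m c) ≤ ((wdeg m : ℤ) : WithBot ℤ) := by
  rw [mdeg_le_iff]
  intro m' hm'
  classical
  rw [MvPolynomial.support_monomial] at hm'
  split at hm'
  · simp at hm'
  · simp only [Finset.mem_singleton] at hm'
    subst hm'; exact le_rfl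

lemma mdeg_add_le (P Q : MvPolynomial σ S) :
    mdeg (P + Q) ≤ max (mdeg P) (mdeg Q) := by
  classical
  rw [mdeg_le_iff]
  intro m hm
  rcases Finset.mem_union.1 (MvPolynomial.support_add hm) with h | h
  · exact le_max_of_le_left (le_mdeg h)
  · exact le_max_of_le_right (le_mdeg h)

lemma mdeg_neg {S : Type*} [CommRing S] (P : MvPolynomial σ S) : mdeg (-P) = mdeg P := by
  simp [mdeg_def, MvPolynomial.support_neg]

lemma mdeg_sub_le {S : Type*} [CommRing S] (P Q : MvPolynomial σ S) :
    mdeg (P - Q) ≤ max (mdeg P) (mdeg Q) := by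
  rw [sub_eq_add_neg]
  simpa [mdeg_neg] using mdeg_add_le P (-Q)

lemma mdeg_mul_le (P Q : MvPolynomial σ S) :
    mdeg (P * Q) ≤ mdeg P + mdeg Q := by
  by_cases hP : P = 0
  · simp [hP]
  by_cases hQ : Q = 0
  · simp [hQ]
  by_cases hPQ : P * Q = 0
  · simp [hPQ]
  rw [mdeg_eq_totalDegree hP, mdeg_eq_totalDegree hQ, mdeg_eq_totalDegree hPQ]
  have := MvPolynomial.totalDegree_mul P Q
  exact_mod_cast this

lemma mdeg_sum_le {ι : Type*} (s : Finset ι) (P : ι → MvPolynomial σ S) {d : WithBot ℤ}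
    (h : ∀ i ∈ s, mdeg (P i) ≤ d) : mdeg (∑ i ∈ s, P i) ≤ d := by
  classical
  induction s using Finset.induction with
  | empty => simp
  | insert a s' hx ih =>
    rw [Finset.sum_insert hx]
    refine le_trans (mdeg_add_le _ _) (max_le (h a (Finset.mem_insert_self a s')) ?_)
    exact ih fun i hi => h i (Finset.mem_insert_of_mem hi)

lemma mdeg_one_le : mdeg (1 : MvPolynomial σ S) ≤ ((0:ℤ) : WithBot ℤ) := by
  have : (1 : MvPolynomial σ S) = MvPolynomial.monomial 0 (1:S) := by
    simp [MvPolynomial.monomial_zero']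
  rw [this]
  simpa [wdeg] using mdeg_monomial_le (0 : σ →₀ ℕ) (1:S)

lemma mdeg_prod_le {ι : Type*} (s : Finset ι) (P : ι → MvPolynomial σ S) (b : ι → ℤ)
    (h : ∀ i ∈ s, mdeg (P i) ≤ ((b i : ℤ) : WithBot ℤ)) :
    mdeg (∏ i ∈ s, P i) ≤ ((∑ i ∈ s, b i : ℤ) : WithBot ℤ) := by
  classical
  induction s using Finset.induction with
  | empty => simpa using mdeg_one_le
  | insert a s' hx ih =>
    rw [Finset.prod_insert hx, Finset.sum_insert hx]
    refine le_trans (mdeg_mul_le _ _) ?_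
    rw [WithBot.coe_add]
    exact add_le_add (h a (Finset.mem_insert_self a s'))
      (ih fun i hi => h i (Finset.mem_insert_of_mem hi))

lemma mdeg_smul_le (c : S) (P : MvPolynomial σ S) : mdeg (c • P) ≤ mdeg P := by
  classical
  rw [mdeg_le_iff]
  intro m hm
  have : m ∈ P.support := by
    by_contra hns
    have : MvPolynomial.coeff m P = 0 := by
      simpa [MvPolynomial.mem_support_iff] using hns
    have : MvPolynomial.coeff m (c • P) = 0 := by
      rw [MvPolynomial.smul_eq_C_mul, MvPolynomial.coeff_C_mul, this, mul_zero]
    exact (MvPolynomial.mem_support_iff.1 hm) this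
  exact le_mdeg this

/-- `a + 1 ≤ d` implies `a ≤ d - 1` in `WithBot ℤ` with `d : ℤ`. -/
lemma wb_le_sub_one {a : WithBot ℤ} {d : ℤ} (h : a + 1 ≤ ((d:ℤ) : WithBot ℤ)) :
    a ≤ ((d - 1 : ℤ) : WithBot ℤ) := by
  cases a with
  | bot => exact bot_le
  | coe x =>
    have : ((x + 1 : ℤ) : WithBot ℤ) ≤ ((d : ℤ) : WithBot ℤ) := by
      push_cast at h ⊢
      convert h using 1
    have hx : x + 1 ≤ d := by exact_mod_cast this
    have : x ≤ d - 1 := by omega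
    exact_mod_cast WithBot.coe_le_coe.2 this

end MdegAPI
section ApplyYAPI

variable {R : Type*} [CommRing R] {n : ℕ}

local notation "prm" => (Finsupp.sumFinsuppAddEquivProdFinsupp :
  (Fin n ⊕ Fin n →₀ ℕ) ≃+ (Fin n →₀ ℕ) × (Fin n →₀ ℕ))

lemma prm_recompose (m : Fin n ⊕ Fin n →₀ ℕ) :
    Finsupp.mapDomain Sum.inl (prm m).1 + Finsupp.mapDomain Sum.inr (prm m).2 = m := by
  classical
  ext v
  cases v with
  | inl a =>
    rw [Finsupp.add_apply, Finsupp.mapDomain_apply Sum.inl_injective,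
      Finsupp.mapDomain_notin_range]
    · rw [Finsupp.fst_sumFinsuppAddEquivProdFinsupp]; ring
    · rintro ⟨x, hx⟩; exact Sum.inr_ne_inl hx
  | inr a =>
    rw [Finsupp.add_apply, Finsupp.mapDomain_apply Sum.inr_injective,
      Finsupp.mapDomain_notin_range]
    · rw [Finsupp.snd_sumFinsuppAddEquivProdFinsupp]; ring
    · rintro ⟨x, hx⟩; exact Sum.inl_ne_inr hx

lemma prm_mapDomain_inl (a : Fin n →₀ ℕ) :
    prm (Finsupp.mapDomain Sum.inl a) = (a, 0) := by
  classical
  have h1 : (prm (Finsupp.mapDomain Sum.inl a)).1 = a := by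
    ext x
    rw [Finsupp.fst_sumFinsuppAddEquivProdFinsupp,
      Finsupp.mapDomain_apply Sum.inl_injective]
  have h2 : (prm (Finsupp.mapDomain Sum.inl a)).2 = 0 := by
    ext x
    rw [Finsupp.snd_sumFinsuppAddEquivProdFinsupp, Finsupp.mapDomain_notin_range]
    · rfl
    · rintro ⟨y, hy⟩; exact Sum.inl_ne_inr hy
  exact Prod.ext h1 h2

lemma prm_mapDomain_inr (a : Fin n →₀ ℕ) :
    prm (Finsupp.mapDomain Sum.inr a) = (0, a) := by
  classical
  have h1 : (prm (Finsupp.mapDomain Sum.inr a)).1 = 0 := by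
    ext x
    rw [Finsupp.fst_sumFinsuppAddEquivProdFinsupp, Finsupp.mapDomain_notin_range]
    · rfl
    · rintro ⟨y, hy⟩; exact Sum.inr_ne_inl hy
  have h2 : (prm (Finsupp.mapDomain Sum.inr a)).2 = a := by
    ext x
    rw [Finsupp.snd_sumFinsuppAddEquivProdFinsupp,
      Finsupp.mapDomain_apply Sum.inr_injective]
  exact Prod.ext h1 h2

lemma wdeg_mapDomain {α β : Type*} (g : α → β) (a : α →₀ ℕ) :
    wdeg (Finsupp.mapDomain g a) = wdeg a := by
  classical
  unfold wdeg
  rw [Finsupp.sum_mapDomain_index] <;> intros <;> rfl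

lemma wdeg_prm (m : Fin n ⊕ Fin n →₀ ℕ) :
    wdeg m = wdeg (prm m).1 + wdeg (prm m).2 := by
  conv_lhs => rw [← prm_recompose m]
  rw [wdeg_add, wdeg_mapDomain, wdeg_mapDomain]

lemma toX_monomial_mul_toY_monomial (a b : Fin n →₀ ℕ) (c c' : R) :
    toX (MvPolynomial.monomial a c) * toY (MvPolynomial.monomial b c')
      = MvPolynomial.monomial (Finsupp.mapDomain Sum.inl a + Finsupp.mapDomain Sum.inr b) (c * c') := by
  rw [toX, toY, MvPolynomial.rename_monomial, MvPolynomial.rename_monomial,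
    MvPolynomial.monomial_mul]

/-- `applyY` as a sum over any superset of the support. -/
lemma applyY_eq_sum_subset (L : MvPolynomial (Fin n) R →ₗ[R] R)
    (P : MvPolynomial (Fin n ⊕ Fin n) R) (T : Finset (Fin n ⊕ Fin n →₀ ℕ))
    (hT : P.support ⊆ T) :
    applyY L P = ∑ m ∈ T,
      MvPolynomial.monomial (prm m).1 (L (MvPolynomial.monomial (prm m).2 (1 : R)) * P.coeff m) := by
  classical
  rw [applyY]
  rw [Finset.sum_subset hT]
  · apply Finset.sum_congr rfl
    intro m _
    rw [MvPolynomial.C_mul_monomial, mul_one]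
  · intro m _ hm
    have : P.coeff m = 0 := by simpa [MvPolynomial.mem_support_iff] using hm
    simp [this]

lemma applyY_add (L : MvPolynomial (Fin n) R →ₗ[R] R)
    (P Q : MvPolynomial (Fin n ⊕ Fin n) R) :
    applyY L (P + Q) = applyY L P + applyY L Q := by
  classical
  rw [applyY_eq_sum_subset L P (P.support ∪ Q.support) Finset.subset_union_left,
    applyY_eq_sum_subset L Q (P.support ∪ Q.support) Finset.subset_union_right,
    applyY_eq_sum_subset L (P + Q) (P.support ∪ Q.support) MvPolynomial.support_add,
    ← Finset.sum_add_distrib]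
  apply Finset.sum_congr rfl
  intro m _
  rw [MvPolynomial.coeff_add, mul_add, map_add (MvPolynomial.monomial _)]

@[simp] lemma applyY_zero (L : MvPolynomial (Fin n) R →ₗ[R] R) : applyY L 0 = 0 := by
  simp [applyY]

/-- `applyY L` as an additive monoid hom. -/
def applyYHom (L : MvPolynomial (Fin n) R →ₗ[R] R) :
    MvPolynomial (Fin n ⊕ Fin n) R →+ MvPolynomial (Fin n) R where
  toFun := applyY L
  map_zero' := applyY_zero L
  map_add' := applyY_add L

lemma applyY_monomial (L : MvPolynomial (Fin n) R →ₗ[R] R) (m : Fin n ⊕ Fin n →₀ ℕ) (c : R) :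
    applyY L (MvPolynomial.monomial m c)
      = MvPolynomial.monomial (prm m).1 (L (MvPolynomial.monomial (prm m).2 (1 : R)) * c) := by
  classical
  rw [applyY_eq_sum_subset L _ {m} (MvPolynomial.support_monomial_subset),
    Finset.sum_singleton, MvPolynomial.coeff_monomial, if_pos rfl]

/-- The key computation: `applyY L (A(x)·B(y)) = L(B) • A`. -/
lemma applyY_toX_mul_toY (L : MvPolynomial (Fin n) R →ₗ[R] R)
    (A B : MvPolynomial (Fin n) R) :
    applyY L (toX A * toY B) = L B • A := by
  classical
  conv_lhs => rw [A.as_sum, B.as_sum]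
  rw [map_sum, map_sum, Finset.sum_mul_sum]
  rw [show applyY L _ = applyYHom L _ from rfl, map_sum (applyYHom L)]
  conv_rhs => rw [B.as_sum, map_sum, A.as_sum]
  simp only [Finset.smul_sum, Finset.sum_smul]
  apply Finset.sum_congr rfl
  intro a _
  rw [show (applyYHom L) (∑ j ∈ B.support, toX ((MvPolynomial.monomial a) (MvPolynomial.coeff a A)) * toY ((MvPolynomial.monomial j) (MvPolynomial.coeff j B))) = ∑ j ∈ B.support, applyYHom L (toX ((MvPolynomial.monomial a) (MvPolynomial.coeff a A)) * toY ((MvPolynomial.monomial j) (MvPolynomial.coeff j B))) from map_sum _ _ _]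
  apply Finset.sum_congr rfl
  intro b _
  show applyY L _ = _
  rw [toX_monomial_mul_toY_monomial, applyY_monomial]
  rw [map_add prm, prm_mapDomain_inl, prm_mapDomain_inr]
  simp only [Prod.fst_add, Prod.snd_add, add_zero, zero_add]
  rw [MvPolynomial.smul_monomial]
  congr 1
  have : L (MvPolynomial.monomial b (MvPolynomial.coeff b B))
      = MvPolynomial.coeff b B * L (MvPolynomial.monomial b 1) := by
    have : MvPolynomial.monomial b (MvPolynomial.coeff b B)
        = MvPolynomial.coeff b B • MvPolynomial.monomial b (1:R) := by
      rw [MvPolynomial.smul_monomial, smul_eq_mul, mul_one]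
    rw [this, map_smul, smul_eq_mul]
  rw [this, smul_eq_mul]; ring

end ApplyYAPI
section KillAPI

variable {R : Type*} [CommRing R] {n : ℕ}

local notation "prm" => (Finsupp.sumFinsuppAddEquivProdFinsupp :
  (Fin n ⊕ Fin n →₀ ℕ) ≃+ (Fin n →₀ ℕ) × (Fin n →₀ ℕ))

lemma annul_mul {f : Fin n → MvPolynomial (Fin n) R} {L : MvPolynomial (Fin n) R →ₗ[R] R}
    {d : WithBot ℤ} (hL : Annuls L (boundedSpan f d)) (v : Fin n)
    (g : MvPolynomial (Fin n) R) (h : mdeg (f v) + mdeg g ≤ d) :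
    L (f v * g) = 0 := by
  classical
  apply hL
  refine ⟨fun u => if u = v then g else 0, ?_, ?_⟩
  · rw [show (∑ i : Fin n, f i * (if i = v then g else 0))
        = ∑ i : Fin n, (if i = v then f i * g else 0) from
        Finset.sum_congr rfl fun i _ => by split <;> simp]
    rw [Finset.sum_ite_eq' Finset.univ v (fun u => f u * g)]
    simp
  · intro u
    by_cases hu : u = v
    · subst hu; simpa using h
    · simp [hu]

lemma kill_lemma (L₁ L₂ : MvPolynomial (Fin n) R →ₗ[R] R)
    (A B : MvPolynomial (Fin n) R) (Q : MvPolynomial (Fin n ⊕ Fin n) R)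
    (h : ∀ m ∈ Q.support,
      L₁ (A * MvPolynomial.monomial (prm m).1 (1:R)) = 0 ∨
      L₂ (B * MvPolynomial.monomial (prm m).2 (1:R)) = 0) :
    L₁ (applyY L₂ (toX A * toY B * Q)) = 0 := by
  classical
  conv_lhs => rw [Q.as_sum, Finset.mul_sum]
  rw [show applyY L₂ _ = applyYHom L₂ _ from rfl, map_sum (applyYHom L₂), map_sum]
  apply Finset.sum_eq_zero
  intro m hm
  have hmono : (MvPolynomial.monomial m (MvPolynomial.coeff m Q))
      = toX (MvPolynomial.monomial (prm m).1 (MvPolynomial.coeff m Q))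
        * toY (MvPolynomial.monomial (prm m).2 (1:R)) := by
    rw [toX_monomial_mul_toY_monomial, mul_one, prm_recompose]
  have hrearr : toX A * toY B * (MvPolynomial.monomial m (MvPolynomial.coeff m Q))
      = toX (A * MvPolynomial.monomial (prm m).1 (MvPolynomial.coeff m Q))
        * toY (B * MvPolynomial.monomial (prm m).2 (1:R)) := by
    rw [hmono, map_mul, map_mul]; ring
  rw [hrearr]
  show L₁ (applyY L₂ _) = 0
  rw [applyY_toX_mul_toY, map_smul, smul_eq_mul]
  rcases h m hm with h1 | h1
  · have : A * MvPolynomial.monomial (prm m).1 (MvPolynomial.coeff m Q)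
        = MvPolynomial.coeff m Q • (A * MvPolynomial.monomial (prm m).1 (1:R)) := by
      have : MvPolynomial.monomial (prm m).1 (MvPolynomial.coeff m Q)
          = MvPolynomial.coeff m Q • MvPolynomial.monomial (prm m).1 (1:R) := by
        rw [MvPolynomial.smul_monomial, smul_eq_mul, mul_one]
      rw [this, mul_smul_comm]
    rw [this, map_smul, smul_eq_mul, h1, mul_zero, mul_zero]
  · rw [h1, zero_mul]

end KillAPI
section DetAPI

variable {S : Type*} [CommRing S] {n : ℕ}

/-- column basis vector supported at `a.castSucc`. -/
def cbv (a : Fin n) : Fin (n+1) → S := fun r => if r = a.castSucc then 1 else 0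

lemma det_updateCol_sum' {κ : Type*} (M : Matrix (Fin (n+1)) (Fin (n+1)) S)
    (j : Fin (n+1)) (s : Finset κ) (c : κ → S) (v : κ → Fin (n+1) → S) :
    (M.updateCol j (fun r => ∑ i ∈ s, c i * v i r)).det
      = ∑ i ∈ s, c i * (M.updateCol j (v i)).det := by
  classical
  induction s using Finset.induction with
  | empty =>
    simp only [Finset.sum_empty]
    apply Matrix.det_eq_zero_of_column_eq_zero j
    intro i
    rw [Matrix.updateCol_self]
  | insert a s' hx ih =>
    simp only [Finset.sum_insert hx]
    have : (fun r => c a * v a r + ∑ i ∈ s', c i * v i r)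
        = (c a • v a) + (fun r => ∑ i ∈ s', c i * v i r) := by
      funext r; simp [mul_comm]
    rw [this, Matrix.det_updateCol_add, Matrix.det_updateCol_smul, ih]

lemma det_ZV (N : Matrix (Fin (n+1)) (Fin (n+1)) S) (j₀ : Fin (n+1)) (a b : Fin n) :
    ((N.updateCol j₀ (cbv a)).updateRow b.castSucc
        (fun c => if c = j₀ then 1 else 0)).det
      = (N.updateCol j₀ (cbv b)).det := by
  classical
  set M₁ := (N.updateCol j₀ (cbv a)).updateRow b.castSucc
      (fun c => if c = j₀ then 1 else 0) with hM₁
  set M₂ := N.updateCol j₀ (cbv b) with hM₂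
  have hL : M₁.det = (-1 : S)^((b.castSucc : ℕ) + (j₀ : ℕ)) * 1
      * (M₁.submatrix b.castSucc.succAbove j₀.succAbove).det := by
    rw [Matrix.det_succ_row M₁ b.castSucc]
    rw [Finset.sum_eq_single_of_mem j₀ (Finset.mem_univ j₀)]
    · have : M₁ b.castSucc j₀ = 1 := by
        rw [hM₁, Matrix.updateRow_self]; exact if_pos rfl
      rw [this]
    · intro c _ hc
      have : M₁ b.castSucc c = 0 := by
        rw [hM₁, Matrix.updateRow_self]; exact if_neg hc
      rw [this]; ring
  have hR : M₂.det = (-1 : S)^((b.castSucc : ℕ) + (j₀ : ℕ)) * 1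
      * (M₂.submatrix b.castSucc.succAbove j₀.succAbove).det := by
    rw [Matrix.det_succ_column M₂ j₀]
    rw [Finset.sum_eq_single_of_mem b.castSucc (Finset.mem_univ _)]
    · have : M₂ b.castSucc j₀ = 1 := by
        rw [hM₂, Matrix.updateCol_self]; unfold cbv; exact if_pos rfl
      rw [this]
    · intro r _ hr
      have : M₂ r j₀ = 0 := by
        rw [hM₂, Matrix.updateCol_self]; unfold cbv; exact if_neg hr
      rw [this]; ring
  rw [hL, hR]
  congr 2
  apply Matrix.ext
  intro r c
  rw [Matrix.submatrix_apply, Matrix.submatrix_apply]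
  rw [hM₁, Matrix.updateRow_ne (Fin.succAbove_ne b.castSucc r), hM₂]
  rw [Matrix.updateCol_ne (Fin.succAbove_ne j₀ c),
    Matrix.updateCol_ne (Fin.succAbove_ne j₀ c)]

lemma rowop_key (N : Matrix (Fin (n+1)) (Fin (n+1)) S) (j₀ : Fin (n+1))
    (zz : Fin n → S) (w : Fin (n+1) → S)
    (hcols : ∀ c, c ≠ j₀ → ∑ k : Fin n, zz k * N k.castSucc c = N (Fin.last n) c + w c)
    (a b : Fin n) :
    zz b * (N.updateCol j₀ (cbv a)).det
      = ((N.updateCol j₀ (cbv a)).updateRow b.castSucc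
          (fun c => if c = j₀ then 0 else w c)).det
        + zz a * (N.updateCol j₀ (cbv b)).det := by
  classical
  set N' := N.updateCol j₀ (cbv a) with hN'
  set coef : Fin (n+1) → S := fun k => if h : k = Fin.last n then -1 else zz (k.castPred h)
    with hcoef
  have hrowsum : (∑ k : Fin (n+1), coef k • N' k) = fun c => if c = j₀ then zz a else w c := by
    funext c
    rw [Finset.sum_apply]
    simp only [Pi.smul_apply, smul_eq_mul]
    rw [Fin.sum_univ_castSucc]
    have hlast : coef (Fin.last n) = -1 := by rw [hcoef]; simp
    have hcs : ∀ i : Fin n, coef i.castSucc = zz i := by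
      intro i
      simp only [hcoef]
      rw [dif_neg (Fin.castSucc_lt_last i).ne, Fin.castPred_castSucc]
    by_cases hc : c = j₀
    · rw [if_pos hc]
      have hcol : ∀ r, N' r c = cbv a r := fun r => by
        rw [hN', hc, Matrix.updateCol_self]
      simp only [hcol, hlast, hcs]
      unfold cbv
      have hiff : ∀ i : Fin n, (if (i.castSucc : Fin (n+1)) = a.castSucc then (1:S) else 0)
          = if i = a then 1 else 0 := by
        intro i
        by_cases h : i = a
        · rw [if_pos h, if_pos (by rw [h])]
        · rw [if_neg (fun hh => h (Fin.castSucc_inj.1 hh)), if_neg h]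
      simp only [hiff, mul_ite, mul_one, mul_zero]
      rw [Finset.sum_ite_eq' Finset.univ a (fun i => zz i)]
      rw [if_pos (Finset.mem_univ a), if_neg (Fin.castSucc_lt_last a).ne']
      ring
    · have h1 : ∀ (k : Fin (n+1)), N' k c = N k c := fun k =>
        Matrix.updateCol_ne hc
      simp only [h1, hlast, hcs]
      rw [if_neg hc]
      have := hcols c hc
      rw [this]; ring
  have hdet := Matrix.det_updateRow_sum N' b.castSucc coef
  rw [hrowsum] at hdet
  have hcoefb : coef b.castSucc = zz b := by
    simp only [hcoef]
    rw [dif_neg (Fin.castSucc_lt_last b).ne, Fin.castPred_castSucc]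
  rw [hcoefb, smul_eq_mul] at hdet
  have hsplit : (fun c => if c = j₀ then zz a else w c)
      = (fun c => if c = j₀ then 0 else w c) + (zz a • fun c => if c = j₀ then (1:S) else 0) := by
    funext c
    by_cases hc : c = j₀ <;> simp [hc]
  rw [hsplit, Matrix.det_updateRow_add, Matrix.det_updateRow_smul, det_ZV] at hdet
  rw [← hdet]

end DetAPI
section SyzygyAPI

variable {R : Type*} [CommRing R] {n : ℕ}

/-- the set of `y`-variables present in an exponent -/
def minsetY (ν : Fin n ⊕ Fin n →₀ ℕ) : Finset (Fin n) :=
  Finset.univ.filter (fun l => ν (Sum.inr l) ≠ 0)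

lemma mem_minsetY {ν : Fin n ⊕ Fin n →₀ ℕ} {l : Fin n} :
    l ∈ minsetY ν ↔ ν (Sum.inr l) ≠ 0 := by
  classical
  simp [minsetY]

lemma fs_sub_add {α : Type*} [DecidableEq α] (μ : α →₀ ℕ) (s : α) (h : μ s ≠ 0) :
    (μ - Finsupp.single s 1) + Finsupp.single s 1 = μ := by
  ext v
  simp only [Finsupp.add_apply, Finsupp.tsub_apply, Finsupp.single_apply]
  split_ifs with hv
  · subst hv; omega
  · omega

lemma syzygy_of_vars (D : Fin n → MvPolynomial (Fin n ⊕ Fin n) R)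
    (hsyz : ∑ k : Fin n, MvPolynomial.X (Sum.inr k) * D k = 0) (e : ℤ)
    (hd : ∀ k, mdeg (D k) ≤ ((e : ℤ) : WithBot ℤ)) :
    ∃ c : Fin n → Fin n → MvPolynomial (Fin n ⊕ Fin n) R,
      (∀ a b, mdeg (c a b) ≤ ((e - 1 : ℤ) : WithBot ℤ)) ∧
      ∀ m, D m = (∑ b, MvPolynomial.X (Sum.inr b) * c m b)
        - ∑ a, MvPolynomial.X (Sum.inr a) * c a m := by
  classical
  set c : Fin n → Fin n → MvPolynomial (Fin n ⊕ Fin n) R := fun a b =>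
    ∑ μ ∈ (D a).support,
      if (minsetY (μ + Finsupp.single (Sum.inr a) 1)).min = (b : WithTop (Fin n)) ∧ b ≠ a
      then MvPolynomial.monomial (μ - Finsupp.single (Sum.inr b) 1) (MvPolynomial.coeff μ (D a))
      else 0
    with hcdef
  have hbne : ∀ {a b : Fin n} {μ : Fin n ⊕ Fin n →₀ ℕ},
      b ∈ minsetY (μ + Finsupp.single (Sum.inr a) 1) → b ≠ a → μ (Sum.inr b) ≠ 0 := by
    intro a b μ hmem hne
    have h2 := mem_minsetY.1 hmem
    rw [Finsupp.add_apply, Finsupp.single_apply,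
      if_neg (fun h => hne ((Sum.inr_injective h).symm))] at h2
    omega
  refine ⟨c, ?_, ?_⟩
  · -- degree bound
    intro a b
    apply mdeg_sum_le
    intro μ hμ
    split_ifs with hcond
    · refine le_trans (mdeg_monomial_le _ _) ?_
      have hb1 : μ (Sum.inr b) ≠ 0 := hbne (Finset.mem_of_min hcond.1) hcond.2
      have hw : wdeg (μ - Finsupp.single (Sum.inr b) 1) + 1 = wdeg μ := by
        have h2 := fs_sub_add μ (Sum.inr b) hb1
        have h3 := wdeg_add (μ - Finsupp.single (Sum.inr b) 1) (Finsupp.single (Sum.inr b) 1)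
        rw [h2, wdeg_single] at h3
        omega
      have hμe : (wdeg μ : ℤ) ≤ e := by
        have h1 := le_mdeg (h := hμ)
        have h2 := le_trans h1 (hd a)
        exact_mod_cast h2
      have h3 : (wdeg (μ - Finsupp.single (Sum.inr b) 1) : ℤ) ≤ e - 1 := by omega
      exact_mod_cast WithBot.coe_le_coe.2 h3
    · simp
  · -- the main identity
    intro m
    apply MvPolynomial.ext
    intro μh
    set νh := μh + Finsupp.single (Sum.inr m) 1 with hνh
    set K := MvPolynomial.coeff μh (D m) with hK
    have hνm : νh (Sum.inr m) ≠ 0 := by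
      rw [hνh, Finsupp.add_apply, Finsupp.single_apply, if_pos rfl]
      omega
    have hmmem : m ∈ minsetY νh := mem_minsetY.2 hνm
    have hne : (minsetY νh).Nonempty := ⟨m, hmmem⟩
    set b₀ := (minsetY νh).min' hne with hb₀def
    have hb₀ : (minsetY νh).min = (b₀ : WithTop (Fin n)) := (Finset.coe_min' hne).symm
    -- Claim 1
    have claim1 : MvPolynomial.coeff μh (∑ b, MvPolynomial.X (Sum.inr b) * c m b)
        = if b₀ = m then 0 else K := by
      rw [MvPolynomial.coeff_sum]
      have hterm : ∀ b : Fin n,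
          MvPolynomial.coeff μh (MvPolynomial.X (Sum.inr b) * c m b)
            = if b₀ = b ∧ b ≠ m then K else 0 := by
        intro b
        rw [MvPolynomial.coeff_X_mul']
        by_cases hsup : Sum.inr b ∈ μh.support
        · rw [if_pos hsup]
          have hμhb : μh (Sum.inr b) ≠ 0 := Finsupp.mem_support_iff.1 hsup
          simp only [hcdef]
          rw [MvPolynomial.coeff_sum]
          rw [Finset.sum_eq_single μh]
          · -- value at μh
            have hiff : ((minsetY (μh + Finsupp.single (Sum.inr m) 1)).min
                = (b : WithTop (Fin n)) ∧ b ≠ m) ↔ (b₀ = b ∧ b ≠ m) := by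
              rw [← hνh, hb₀]
              exact and_congr WithTop.coe_eq_coe Iff.rfl
            by_cases hcnd : b₀ = b ∧ b ≠ m
            · rw [if_pos (hiff.2 hcnd), if_pos hcnd, MvPolynomial.coeff_monomial]
              simp [hK]
            · rw [if_neg (fun h => hcnd (hiff.1 h)), if_neg hcnd, MvPolynomial.coeff_zero]
          · -- other μ give zero
            intro μ hμ hμne
            split_ifs with hcnd
            · rw [MvPolynomial.coeff_monomial]
              rw [if_neg]
              intro heq
              apply hμne
              have hb1 : μ (Sum.inr b) ≠ 0 := hbne (Finset.mem_of_min hcnd.1) hcnd.2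
              calc μ = (μ - Finsupp.single (Sum.inr b) 1) + Finsupp.single (Sum.inr b) 1 :=
                  (fs_sub_add μ _ hb1).symm
                _ = (μh - Finsupp.single (Sum.inr b) 1) + Finsupp.single (Sum.inr b) 1 := by rw [heq]
                _ = μh := fs_sub_add μh _ hμhb
            · rfl
          · -- μh not in support
            intro hnsup
            have : MvPolynomial.coeff μh (D m) = 0 := by
              simpa [MvPolynomial.mem_support_iff] using hnsup
            split_ifs <;> simp [MvPolynomial.coeff_monomial, this]
        · rw [if_neg hsup]
          rw [eq_comm]
          rw [if_neg]
          rintro ⟨hbb, hbm⟩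
          apply hsup
          rw [Finsupp.mem_support_iff]
          have hb0mem : b ∈ minsetY νh := by
            rw [← hbb]; exact Finset.min'_mem _ _
          have := mem_minsetY.1 hb0mem
          rw [hνh, Finsupp.add_apply, Finsupp.single_apply,
            if_neg (fun h => hbm ((Sum.inr_injective h).symm))] at this
          omega
      rw [Finset.sum_congr rfl (fun b _ => hterm b)]
      rw [Finset.sum_eq_single b₀]
      · by_cases hbm : b₀ = m
        · rw [if_pos hbm, if_neg (fun h => h.2 hbm)]
        · rw [if_neg hbm, if_pos ⟨rfl, hbm⟩]
      · intro b _ hb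
        rw [if_neg (fun h => hb h.1.symm)]
      · intro h
        exact absurd (Finset.mem_univ b₀) h
    -- Claim 2
    have claim2 : MvPolynomial.coeff μh (∑ a, MvPolynomial.X (Sum.inr a) * c a m)
        = if b₀ = m then -K else 0 := by
      rw [MvPolynomial.coeff_sum]
      set g : Fin n → R := fun a => MvPolynomial.coeff νh (MvPolynomial.X (Sum.inr a) * D a)
        with hg
      have hterm : ∀ a : Fin n,
          MvPolynomial.coeff μh (MvPolynomial.X (Sum.inr a) * c a m)
            = if b₀ = m ∧ a ≠ m then g a else 0 := by
        intro a
        rw [MvPolynomial.coeff_X_mul']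
        by_cases hsup : Sum.inr a ∈ μh.support
        · rw [if_pos hsup]
          have hμha : μh (Sum.inr a) ≠ 0 := Finsupp.mem_support_iff.1 hsup
          set μa := (μh - Finsupp.single (Sum.inr a) 1) + Finsupp.single (Sum.inr m) 1 with hμa
          have hμaa : μa + Finsupp.single (Sum.inr a) 1 = νh := by
            rw [hμa, hνh, add_right_comm, fs_sub_add μh _ hμha]
          have hμam : μa - Finsupp.single (Sum.inr m) 1 = μh - Finsupp.single (Sum.inr a) 1 :=
            add_tsub_cancel_right _ _
          simp only [hcdef]
          rw [MvPolynomial.coeff_sum]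
          rw [Finset.sum_eq_single μa]
          · -- value at μa
            rw [hμaa, hb₀]
            by_cases hcnd : b₀ = m ∧ a ≠ m
            · have hcnd' : (b₀ : WithTop (Fin n)) = (m : WithTop (Fin n)) ∧ m ≠ a :=
                ⟨WithTop.coe_eq_coe.2 hcnd.1, fun h => hcnd.2 h.symm⟩
              rw [if_pos hcnd', if_pos hcnd]
              rw [MvPolynomial.coeff_monomial, if_pos hμam]
              -- coeff μa (D a) = g a
              have hνa : νh (Sum.inr a) ≠ 0 := by
                rw [hνh, Finsupp.add_apply]
                omega
              have hνsub : νh - Finsupp.single (Sum.inr a) 1 = μa := by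
                rw [← hμaa, add_tsub_cancel_right]
              simp only [hg]
              rw [MvPolynomial.coeff_X_mul', if_pos (Finsupp.mem_support_iff.2 hνa), hνsub]
            · have hcnd' : ¬((b₀ : WithTop (Fin n)) = (m : WithTop (Fin n)) ∧ m ≠ a) :=
                fun h => hcnd ⟨WithTop.coe_eq_coe.1 h.1, fun hh => h.2 hh.symm⟩
              rw [if_neg hcnd', if_neg hcnd, MvPolynomial.coeff_zero]
          · -- other μ give zero
            intro μ hμ hμne
            split_ifs with hcnd
            · rw [MvPolynomial.coeff_monomial, if_neg]
              intro heq
              apply hμne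
              have hm1 : μ (Sum.inr m) ≠ 0 := hbne (Finset.mem_of_min hcnd.1) hcnd.2
              calc μ = (μ - Finsupp.single (Sum.inr m) 1) + Finsupp.single (Sum.inr m) 1 :=
                  (fs_sub_add μ _ hm1).symm
                _ = (μh - Finsupp.single (Sum.inr a) 1) + Finsupp.single (Sum.inr m) 1 := by
                    rw [heq]
                _ = μa := by rw [hμa]
            · rfl
          · -- μa not in support
            intro hnsup
            have h0 : MvPolynomial.coeff μa (D a) = 0 := by
              simpa [MvPolynomial.mem_support_iff] using hnsup
            split_ifs <;> simp [MvPolynomial.coeff_monomial, h0]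
        · rw [if_neg hsup]
          symm
          by_cases hcnd : b₀ = m ∧ a ≠ m
          · rw [if_pos hcnd]
            simp only [hg]
            rw [MvPolynomial.coeff_X_mul', if_neg]
            rw [Finsupp.mem_support_iff]
            push_neg
            rw [hνh, Finsupp.add_apply, Finsupp.single_apply,
              if_neg (fun h => hcnd.2 (Sum.inr_injective h).symm)]
            have : μh (Sum.inr a) = 0 := by
              by_contra hcc
              exact hsup (Finsupp.mem_support_iff.2 hcc)
            omega
          · rw [if_neg hcnd]
      rw [Finset.sum_congr rfl (fun a _ => hterm a)]
      by_cases hbm : b₀ = m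
      · rw [if_pos hbm]
        have hsplit : ∀ a : Fin n, (if b₀ = m ∧ a ≠ m then g a else 0)
            = g a - (if a = m then g a else 0) := by
          intro a
          by_cases ham : a = m
          · rw [if_neg (fun h => h.2 ham), if_pos ham, ham, sub_self]
          · rw [if_pos ⟨hbm, ham⟩, if_neg ham, sub_zero]
        rw [Finset.sum_congr rfl (fun a _ => hsplit a), Finset.sum_sub_distrib]
        have hgsum : ∑ a, g a = 0 := by
          rw [hg]
          rw [← MvPolynomial.coeff_sum]
          rw [hsyz, MvPolynomial.coeff_zero]
        rw [hgsum, Finset.sum_ite_eq' Finset.univ m g, if_pos (Finset.mem_univ m)]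
        have hgm : g m = K := by
          simp only [hg]
          rw [MvPolynomial.coeff_X_mul', if_pos (Finsupp.mem_support_iff.2 hνm)]
          rw [hK, hνh, add_tsub_cancel_right]
        rw [hgm]
        ring
      · rw [if_neg hbm]
        apply Finset.sum_eq_zero
        intro a _
        rw [if_neg (fun h => hbm h.1)]
    -- assemble
    rw [MvPolynomial.coeff_sub, claim1, claim2]
    by_cases hbm : b₀ = m
    · rw [if_pos hbm, if_pos hbm]; rw [hK]; ring
    · rw [if_neg hbm, if_neg hbm]; rw [hK]; ring

end SyzygyAPI
section FlipAPI

variable {R : Type*} [CommRing R] {n : ℕ}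

lemma mdeg_C_le (c : R) : mdeg (MvPolynomial.C c : MvPolynomial (Fin n ⊕ Fin n) R)
    ≤ ((0:ℤ) : WithBot ℤ) := by
  rw [MvPolynomial.C_apply]
  simpa [wdeg] using mdeg_monomial_le (0 : Fin n ⊕ Fin n →₀ ℕ) c

lemma mdeg_pow_le {σ : Type*} (P : MvPolynomial σ R) (e : ℕ)
    (h : mdeg P ≤ ((1:ℤ) : WithBot ℤ)) : mdeg (P ^ e) ≤ ((e : ℤ) : WithBot ℤ) := by
  induction e with
  | zero => simpa using mdeg_one_le
  | succ k ih =>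
    rw [pow_succ]
    refine le_trans (mdeg_mul_le _ _) ?_
    have : ((k : ℤ) : WithBot ℤ) + ((1:ℤ) : WithBot ℤ) = (((k+1 : ℕ) : ℤ) : WithBot ℤ) := by
      push_cast
      rfl
    rw [← this]
    exact add_le_add ih h

lemma mdeg_aeval_le (φ : (Fin n ⊕ Fin n) → MvPolynomial (Fin n ⊕ Fin n) R)
    (hφ : ∀ v, mdeg (φ v) ≤ ((1:ℤ) : WithBot ℤ)) (P : MvPolynomial (Fin n ⊕ Fin n) R) :
    mdeg (MvPolynomial.aeval φ P) ≤ mdeg P := by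
  classical
  conv_lhs => rw [P.as_sum]
  rw [map_sum]
  apply mdeg_sum_le
  intro m hm
  rw [MvPolynomial.aeval_monomial, MvPolynomial.algebraMap_eq]
  have h1 : mdeg (MvPolynomial.C (MvPolynomial.coeff m P) : MvPolynomial (Fin n ⊕ Fin n) R)
      ≤ ((0:ℤ) : WithBot ℤ) := mdeg_C_le _
  have h2 : mdeg (m.prod fun v k => φ v ^ k) ≤ ((wdeg m : ℤ) : WithBot ℤ) := by
    rw [Finsupp.prod]
    refine le_trans (mdeg_prod_le m.support (fun v => φ v ^ m v) (fun v => (m v : ℤ))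
      (fun v _ => mdeg_pow_le (φ v) (m v) (hφ v))) ?_
    have hw : (∑ v ∈ m.support, (m v : ℤ)) = (wdeg m : ℤ) := by
      unfold wdeg
      rw [Finsupp.sum]
      push_cast
      rfl
    rw [hw]
  refine le_trans (mdeg_mul_le _ _) (le_trans (add_le_add h1 h2) ?_)
  rw [← WithBot.coe_add, zero_add]
  exact le_mdeg hm

/-- The involution `x ↦ x`, `y ↦ x - y` of `R[x,y]`. -/
def flipY : MvPolynomial (Fin n ⊕ Fin n) R →ₐ[R] MvPolynomial (Fin n ⊕ Fin n) R :=
  MvPolynomial.aeval (Sum.elim (fun i => MvPolynomial.X (Sum.inl i))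
    (fun i => MvPolynomial.X (Sum.inl i) - MvPolynomial.X (Sum.inr i)))

@[simp] lemma flipY_X_inl (i : Fin n) :
    flipY (MvPolynomial.X (Sum.inl i) : MvPolynomial (Fin n ⊕ Fin n) R)
      = MvPolynomial.X (Sum.inl i) := by
  simp [flipY]

@[simp] lemma flipY_X_inr (i : Fin n) :
    flipY (MvPolynomial.X (Sum.inr i) : MvPolynomial (Fin n ⊕ Fin n) R)
      = MvPolynomial.X (Sum.inl i) - MvPolynomial.X (Sum.inr i) := by
  simp [flipY]

lemma flipY_flipY (P : MvPolynomial (Fin n ⊕ Fin n) R) : flipY (flipY P) = P := by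
  have : (flipY : MvPolynomial (Fin n ⊕ Fin n) R →ₐ[R] _).comp flipY = AlgHom.id R _ := by
    apply MvPolynomial.algHom_ext
    intro v
    cases v with
    | inl i => simp
    | inr i => simp [map_sub]
  calc flipY (flipY P) = (flipY.comp flipY) P := rfl
    _ = P := by rw [this]; rfl

lemma mdeg_flipY_le (P : MvPolynomial (Fin n ⊕ Fin n) R) : mdeg (flipY P) ≤ mdeg P := by
  apply mdeg_aeval_le
  intro v
  cases v with
  | inl i =>
    have : (MvPolynomial.X (Sum.inl i) : MvPolynomial (Fin n ⊕ Fin n) R)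
        = MvPolynomial.monomial (Finsupp.single (Sum.inl i) 1) 1 := by
      rw [MvPolynomial.X]
    rw [Sum.elim_inl, this]
    simpa [wdeg_single] using mdeg_monomial_le (Finsupp.single (Sum.inl i : Fin n ⊕ Fin n) 1) (1:R)
  | inr i =>
    rw [Sum.elim_inr]
    refine le_trans (mdeg_sub_le _ _) (max_le ?_ ?_) <;>
    · rw [MvPolynomial.X]
      simpa [wdeg_single] using mdeg_monomial_le (Finsupp.single _ 1) (1:R)

lemma syzygy_z (D : Fin n → MvPolynomial (Fin n ⊕ Fin n) R)
    (hsyz : ∑ k : Fin n, (MvPolynomial.X (Sum.inl k) - MvPolynomial.X (Sum.inr k)) * D k = 0)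
    (e : ℤ) (hd : ∀ k, mdeg (D k) ≤ ((e : ℤ) : WithBot ℤ)) :
    ∃ c : Fin n → Fin n → MvPolynomial (Fin n ⊕ Fin n) R,
      (∀ a b, mdeg (c a b) ≤ ((e - 1 : ℤ) : WithBot ℤ)) ∧
      ∀ m, D m = (∑ b, (MvPolynomial.X (Sum.inl b) - MvPolynomial.X (Sum.inr b)) * c m b)
        - ∑ a, (MvPolynomial.X (Sum.inl a) - MvPolynomial.X (Sum.inr a)) * c a m := by
  classical
  set D' : Fin n → MvPolynomial (Fin n ⊕ Fin n) R := fun k => flipY (D k) with hD'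
  have hsyz' : ∑ k : Fin n, MvPolynomial.X (Sum.inr k) * D' k = 0 := by
    have := congrArg flipY hsyz
    rw [map_sum, map_zero] at this
    rw [← this]
    apply Finset.sum_congr rfl
    intro k _
    rw [map_mul, map_sub, flipY_X_inl, flipY_X_inr]
    ring_nf
    rfl
  have hd' : ∀ k, mdeg (D' k) ≤ ((e : ℤ) : WithBot ℤ) :=
    fun k => le_trans (mdeg_flipY_le _) (hd k)
  obtain ⟨c', hc'deg, hc'⟩ := syzygy_of_vars D' hsyz' e hd'
  refine ⟨fun a b => flipY (c' a b), ?_, ?_⟩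
  · intro a b
    exact le_trans (mdeg_flipY_le _) (hc'deg a b)
  · intro m
    have := congrArg flipY (hc' m)
    rw [map_sub, map_sum, map_sum] at this
    have hDm : flipY (D' m) = D m := flipY_flipY (D m)
    rw [hDm] at this
    rw [this]
    congr 1
    · apply Finset.sum_congr rfl
      intro b _
      rw [map_mul, flipY_X_inr]
    · apply Finset.sum_congr rfl
      intro a _
      rw [map_mul, flipY_X_inr]

end FlipAPI
section KeyLemma

variable {R : Type*} [CommRing R] {n : ℕ}

local notation "prm" => (Finsupp.sumFinsuppAddEquivProdFinsupp :
  (Fin n ⊕ Fin n →₀ ℕ) ≃+ (Fin n →₀ ℕ) × (Fin n →₀ ℕ))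

lemma key_vanish
    (f : Fin n → MvPolynomial (Fin n) R)
    (δ₁ δ₂ : ℤ) (hδ₁ : 0 ≤ δ₁) (hδ₂ : 0 ≤ δ₂)
    (L₁ L₂ : MvPolynomial (Fin n) R →ₗ[R] R)
    (hL₁ : Annuls L₁ (boundedSpan f ((deltaF f + δ₁ : ℤ) : WithBot ℤ)))
    (hL₂ : Annuls L₂ (boundedSpan f ((deltaF f + δ₂ : ℤ) : WithBot ℤ)))
    (N : Matrix (Fin (n+1)) (Fin (n+1)) (MvPolynomial (Fin n ⊕ Fin n) R))
    (j₀ : Fin (n+1)) (d : Fin (n+1) → ℤ)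
    (G : Fin (n+1) → MvPolynomial (Fin n) R)
    (hlast0 : N (Fin.last n) j₀ = 0)
    (hsyz : ∑ k : Fin n,
      (MvPolynomial.X (Sum.inl k) - MvPolynomial.X (Sum.inr k)) * N k.castSucc j₀ = 0)
    (hjdeg : ∀ r : Fin n, mdeg (N r.castSucc j₀) ≤ ((d j₀ - 1 : ℤ) : WithBot ℤ))
    (hcol : ∀ c, c ≠ j₀ → (N (Fin.last n) c = toX (G c) ∧
        (∑ k : Fin n, (MvPolynomial.X (Sum.inl k) - MvPolynomial.X (Sum.inr k))
            * N k.castSucc c = toX (G c) - toY (G c)) ∧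
        (∀ r : Fin n, mdeg (N r.castSucc c) ≤ ((d c - 1 : ℤ) : WithBot ℤ)) ∧
        mdeg (G c) ≤ ((d c : ℤ) : WithBot ℤ)))
    (hGf : ∀ c, c ≠ j₀ → c ≠ Fin.last n → ∃ v, G c = f v)
    (hsum : (∑ v : Fin n, (d v.castSucc - 1)) ≤ deltaF f)
    (hdF : d (Fin.last n) ≤ deltaF f + δ₁ + δ₂ + 1) :
    L₁ (applyY L₂ N.det) = 0 := by
  classical
  set z : Fin n → MvPolynomial (Fin n ⊕ Fin n) R :=
    fun k => MvPolynomial.X (Sum.inl k) - MvPolynomial.X (Sum.inr k) with hzdef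
  set D : Fin n → MvPolynomial (Fin n ⊕ Fin n) R := fun r => N r.castSucc j₀ with hDdef
  obtain ⟨cc, hccdeg, hccrep⟩ := syzygy_z D hsyz (d j₀ - 1) hjdeg
  set V : Fin n → MvPolynomial (Fin n ⊕ Fin n) R :=
    fun a => (N.updateCol j₀ (cbv a)).det with hVdef
  -- column expansion of the determinant
  have hNcol : N = N.updateCol j₀ (fun r => ∑ m : Fin n, D m * cbv m r) := by
    conv_lhs => rw [← Matrix.updateCol_eq_self N j₀]
    apply congrArg (Matrix.updateCol N j₀)
    funext r
    induction r using Fin.lastCases with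
    | last =>
      rw [hlast0]
      symm
      apply Finset.sum_eq_zero
      intro m _
      have : cbv (S := MvPolynomial (Fin n ⊕ Fin n) R) m (Fin.last n) = 0 := if_neg (Fin.castSucc_lt_last m).ne'
      rw [this, mul_zero]
    | cast i =>
      symm
      rw [Finset.sum_eq_single i]
      · rw [show cbv (S := MvPolynomial (Fin n ⊕ Fin n) R) i i.castSucc = 1 from if_pos rfl, mul_one, hDdef]
      · intro m _ hmi
        have : cbv (S := MvPolynomial (Fin n ⊕ Fin n) R) m i.castSucc = 0 :=
          if_neg (fun h => hmi (Fin.castSucc_inj.1 h).symm)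
        rw [this, mul_zero]
      · intro h
        exact absurd (Finset.mem_univ i) h
  have hdet1 : N.det = ∑ m : Fin n, D m * V m := by
    conv_lhs => rw [hNcol]
    exact det_updateCol_sum' N j₀ Finset.univ D cbv
  -- syzygy decomposition of the column
  have hdet2 : N.det = ∑ a : Fin n, ∑ b : Fin n, cc a b * (z b * V a - z a * V b) := by
    rw [hdet1]
    have hper : ∀ m : Fin n, D m * V m
        = (∑ b, z b * cc m b * V m) - ∑ a, z a * cc a m * V m := by
      intro m
      rw [hccrep m, sub_mul, Finset.sum_mul, Finset.sum_mul]
    rw [Finset.sum_congr rfl (fun m _ => hper m), Finset.sum_sub_distrib]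
    rw [Finset.sum_comm (f := fun m a => z a * cc a m * V m)]
    rw [← Finset.sum_sub_distrib]
    apply Finset.sum_congr rfl
    intro a _
    rw [← Finset.sum_sub_distrib]
    apply Finset.sum_congr rfl
    intro b _
    ring
  -- push the functionals inside
  rw [hdet2]
  rw [show applyY L₂ _ = applyYHom L₂ _ from rfl, map_sum (applyYHom L₂), map_sum]
  apply Finset.sum_eq_zero
  intro a _
  rw [show (applyYHom L₂) _ = ∑ b : Fin n, applyYHom L₂ (cc a b * (z b * V a - z a * V b))
    from map_sum _ _ _, map_sum]
  apply Finset.sum_eq_zero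
  intro b _
  by_cases hab : a = b
  · subst hab
    rw [sub_self, mul_zero]
    show L₁ (applyY L₂ 0) = 0
    rw [applyY_zero, map_zero]
  -- main case : a ≠ b
  have hrowop : z b * V a - z a * V b
      = ((N.updateCol j₀ (cbv a)).updateRow b.castSucc
          (fun c => if c = j₀ then 0 else -(toY (G c)))).det := by
    have := rowop_key N j₀ z (fun c => -(toY (G c))) ?_ a b
    · rw [hVdef]
      rw [this]
      ring
    · intro c hc
      rw [(hcol c hc).2.1, (hcol c hc).1]
      ring
  rw [hrowop]
  set M := (N.updateCol j₀ (cbv a)).updateRow b.castSucc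
      (fun c => if c = j₀ then 0 else -(toY (G c))) with hMdef
  rw [Matrix.det_apply, Finset.mul_sum]
  rw [show (applyYHom L₂) _ = ∑ σ ∈ Finset.univ, applyYHom L₂
      (cc a b * (Equiv.Perm.sign σ • ∏ i, M (σ i) i)) from map_sum _ _ _, map_sum]
  apply Finset.sum_eq_zero
  intro σ _
  rw [Units.smul_def, mul_smul_comm]
  rw [map_zsmul (applyYHom L₂), map_zsmul L₁]
  suffices h : L₁ (applyYHom L₂ (cc a b * ∏ i, M (σ i) i)) = 0 by
    rw [h, smul_zero]
  show L₁ (applyY L₂ (cc a b * ∏ i, M (σ i) i)) = 0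
  by_cases hσ : σ j₀ = a.castSucc
  case neg =>
    -- the j₀-column factor vanishes
    have hz0 : M (σ j₀) j₀ = 0 := by
      by_cases hr : σ j₀ = b.castSucc
      · rw [hMdef, hr, Matrix.updateRow_self, if_pos rfl]
      · rw [hMdef, Matrix.updateRow_ne hr, Matrix.updateCol_self]
        exact if_neg hσ
    rw [Finset.prod_eq_zero (f := fun i => M (σ i) i) (Finset.mem_univ j₀) hz0, mul_zero]
    rw [applyY_zero, map_zero]
  case pos =>
  set i₀ := σ.symm (Fin.last n) with hi₀def
  set j₁ := σ.symm b.castSucc with hj₁def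
  have hσi₀ : σ i₀ = Fin.last n := Equiv.apply_symm_apply σ _
  have hσj₁ : σ j₁ = b.castSucc := Equiv.apply_symm_apply σ _
  have hi₀j₀ : i₀ ≠ j₀ := by
    intro h
    rw [← h, hσi₀] at hσ
    exact (Fin.castSucc_lt_last a).ne' hσ
  have hj₁j₀ : j₁ ≠ j₀ := by
    intro h
    rw [← h, hσj₁] at hσ
    exact hab (Fin.castSucc_inj.1 hσ.symm)
  have hi₀j₁ : i₀ ≠ j₁ := by
    intro h
    have h2 := hσi₀
    rw [h, hσj₁] at h2
    exact (Fin.castSucc_lt_last b).ne h2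
  have hEj₀ : M (σ j₀) j₀ = 1 := by
    rw [hσ, hMdef, Matrix.updateRow_ne (fun h => hab (Fin.castSucc_inj.1 h)),
      Matrix.updateCol_self]
    exact if_pos rfl
  have hEi₀ : M (σ i₀) i₀ = toX (G i₀) := by
    rw [hσi₀, hMdef, Matrix.updateRow_ne (Fin.castSucc_lt_last b).ne',
      Matrix.updateCol_ne hi₀j₀]
    exact (hcol i₀ hi₀j₀).1
  have hEj₁ : M (σ j₁) j₁ = -(toY (G j₁)) := by
    rw [hσj₁, hMdef, Matrix.updateRow_self]
    exact if_neg hj₁j₀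
  set s₃ := ((Finset.univ.erase j₀).erase i₀).erase j₁ with hs₃def
  have hprod : (∏ i, M (σ i) i)
      = M (σ j₀) j₀ * (M (σ i₀) i₀ * (M (σ j₁) j₁ * ∏ i ∈ s₃, M (σ i) i)) := by
    rw [hs₃def]
    rw [← Finset.mul_prod_erase Finset.univ (fun i => M (σ i) i) (Finset.mem_univ j₀)]
    congr 1
    rw [← Finset.mul_prod_erase _ (fun i => M (σ i) i)
      (Finset.mem_erase.2 ⟨hi₀j₀, Finset.mem_univ i₀⟩)]
    congr 1
    rw [← Finset.mul_prod_erase _ (fun i => M (σ i) i)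
      (Finset.mem_erase.2 ⟨hi₀j₁.symm, Finset.mem_erase.2 ⟨hj₁j₀, Finset.mem_univ j₁⟩⟩)]
  rw [hprod, hEj₀, hEi₀, hEj₁, one_mul]
  set Q := -(cc a b * ∏ i ∈ s₃, M (σ i) i) with hQdef
  have hform : cc a b * (toX (G i₀) * (-(toY (G j₁)) * ∏ i ∈ s₃, M (σ i) i))
      = toX (G i₀) * toY (G j₁) * Q := by
    rw [hQdef]; ring
  rw [hform]
  -- degree bounds on the minor factors
  have hS3 : ∀ i ∈ s₃, mdeg (M (σ i) i) ≤ ((d i - 1 : ℤ) : WithBot ℤ) := by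
    intro i hi
    have hij₁ : i ≠ j₁ := (Finset.mem_erase.1 hi).1
    have hii₀ : i ≠ i₀ := (Finset.mem_erase.1 (Finset.mem_erase.1 hi).2).1
    have hij₀ : i ≠ j₀ :=
      (Finset.mem_erase.1 (Finset.mem_erase.1 (Finset.mem_erase.1 hi).2).2).1
    have hσil : σ i ≠ Fin.last n := fun h => hii₀ (by
      rw [hi₀def, ← h, Equiv.symm_apply_apply])
    obtain ⟨r, hr⟩ := Fin.exists_castSucc_eq.2 hσil
    have hσib : σ i ≠ b.castSucc := fun h => hij₁ (by
      rw [hj₁def, ← h, Equiv.symm_apply_apply])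
    rw [hMdef, Matrix.updateRow_ne hσib, Matrix.updateCol_ne hij₀, ← hr]
    exact (hcol i hij₀).2.2.1 r
  have hQdeg : mdeg Q ≤ (((d j₀ - 2) + ∑ i ∈ s₃, (d i - 1) : ℤ) : WithBot ℤ) := by
    rw [hQdef, mdeg_neg]
    refine le_trans (mdeg_mul_le _ _) ?_
    rw [WithBot.coe_add]
    refine add_le_add ?_ (mdeg_prod_le s₃ _ (fun i => d i - 1) hS3)
    have h2 : (d j₀ - 1 - 1 : ℤ) = d j₀ - 2 := by ring
    have := hccdeg a b
    rw [h2] at this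
    exact this
  -- arithmetic bookkeeping
  have hStot : (∑ i : Fin (n+1), (d i - 1)) ≤ deltaF f + (d (Fin.last n) - 1) := by
    rw [Fin.sum_univ_castSucc]
    linarith [hsum]
  have hsplit : (∑ i : Fin (n+1), (d i - 1))
      = (d j₀ - 1) + ((d i₀ - 1) + ((d j₁ - 1) + ∑ i ∈ s₃, (d i - 1))) := by
    rw [← Finset.add_sum_erase _ _ (Finset.mem_univ j₀)]
    congr 1
    rw [← Finset.add_sum_erase _ _
      (Finset.mem_erase.2 ⟨hi₀j₀, Finset.mem_univ i₀⟩)]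
    congr 1
    rw [← Finset.add_sum_erase _ _
      (Finset.mem_erase.2 ⟨hi₀j₁.symm, Finset.mem_erase.2 ⟨hj₁j₀, Finset.mem_univ j₁⟩⟩)]
  -- apply the kill lemma
  apply kill_lemma L₁ L₂ (G i₀) (G j₁) Q
  intro m hm
  have hwm : ((wdeg m : ℤ)) ≤ (d j₀ - 2) + ∑ i ∈ s₃, (d i - 1) := by
    have h1 := le_mdeg (h := hm)
    have h2 := le_trans h1 hQdeg
    exact_mod_cast h2
  have hweq : wdeg m = wdeg (prm m).1 + wdeg (prm m).2 := wdeg_prm m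
  have hw12 : (wdeg (prm m).1 : ℤ) + (wdeg (prm m).2 : ℤ)
      ≤ (d j₀ - 2) + ∑ i ∈ s₃, (d i - 1) := by
    rw [hweq] at hwm
    push_cast at hwm
    linarith [hwm]
  by_cases hi₀l : i₀ = Fin.last n
  · -- x-side entry is the F-column; use the y-side (an f-column)
    right
    have hj₁l : j₁ ≠ Fin.last n := fun h => hi₀j₁ (hi₀l.trans h.symm)
    obtain ⟨v, hv⟩ := hGf j₁ hj₁j₀ hj₁l
    rw [hv]
    apply annul_mul hL₂ v
    have hfv : mdeg (f v) ≤ ((d j₁ : ℤ) : WithBot ℤ) := hv ▸ (hcol j₁ hj₁j₀).2.2.2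
    have hdi₀ : d i₀ = d (Fin.last n) := by rw [hi₀l]
    have harith : d j₁ + (wdeg (prm m).2 : ℤ) ≤ deltaF f + δ₂ := by
      linarith [hw12, hsplit, hStot, hδ₂, hdi₀,
        (Nat.cast_nonneg (wdeg (prm m).1) : (0:ℤ) ≤ (wdeg (prm m).1 : ℤ))]
    calc mdeg (f v) + mdeg (MvPolynomial.monomial (prm m).2 (1:R))
        ≤ ((d j₁ : ℤ) : WithBot ℤ) + ((wdeg (prm m).2 : ℤ) : WithBot ℤ) :=
          add_le_add hfv (mdeg_monomial_le _ _)
      _ = (((d j₁ + wdeg (prm m).2 : ℤ)) : WithBot ℤ) := by rw [← WithBot.coe_add]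
      _ ≤ ((deltaF f + δ₂ : ℤ) : WithBot ℤ) := WithBot.coe_le_coe.2 harith
  · by_cases hj₁l : j₁ = Fin.last n
    · -- y-side entry is the F-column; use the x-side
      left
      obtain ⟨v, hv⟩ := hGf i₀ hi₀j₀ hi₀l
      rw [hv]
      apply annul_mul hL₁ v
      have hfv : mdeg (f v) ≤ ((d i₀ : ℤ) : WithBot ℤ) := hv ▸ (hcol i₀ hi₀j₀).2.2.2
      have hdj₁ : d j₁ = d (Fin.last n) := by rw [hj₁l]
      have harith : d i₀ + (wdeg (prm m).1 : ℤ) ≤ deltaF f + δ₁ := by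
        linarith [hw12, hsplit, hStot, hδ₁, hdj₁,
          (Nat.cast_nonneg (wdeg (prm m).2) : (0:ℤ) ≤ (wdeg (prm m).2 : ℤ))]
      calc mdeg (f v) + mdeg (MvPolynomial.monomial (prm m).1 (1:R))
          ≤ ((d i₀ : ℤ) : WithBot ℤ) + ((wdeg (prm m).1 : ℤ) : WithBot ℤ) :=
            add_le_add hfv (mdeg_monomial_le _ _)
        _ = (((d i₀ + wdeg (prm m).1 : ℤ)) : WithBot ℤ) := by rw [← WithBot.coe_add]
        _ ≤ ((deltaF f + δ₁ : ℤ) : WithBot ℤ) := WithBot.coe_le_coe.2 harith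
    · -- both entries are f-columns
      obtain ⟨v₁, hv₁⟩ := hGf i₀ hi₀j₀ hi₀l
      obtain ⟨v₂, hv₂⟩ := hGf j₁ hj₁j₀ hj₁l
      by_cases hcase : d i₀ + (wdeg (prm m).1 : ℤ) ≤ deltaF f + δ₁
      · left
        rw [hv₁]
        apply annul_mul hL₁ v₁
        have hfv : mdeg (f v₁) ≤ ((d i₀ : ℤ) : WithBot ℤ) := hv₁ ▸ (hcol i₀ hi₀j₀).2.2.2
        calc mdeg (f v₁) + mdeg (MvPolynomial.monomial (prm m).1 (1:R))
            ≤ ((d i₀ : ℤ) : WithBot ℤ) + ((wdeg (prm m).1 : ℤ) : WithBot ℤ) :=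
              add_le_add hfv (mdeg_monomial_le _ _)
          _ = (((d i₀ + wdeg (prm m).1 : ℤ)) : WithBot ℤ) := by rw [← WithBot.coe_add]
          _ ≤ ((deltaF f + δ₁ : ℤ) : WithBot ℤ) := WithBot.coe_le_coe.2 hcase
      · right
        rw [hv₂]
        apply annul_mul hL₂ v₂
        have hfv : mdeg (f v₂) ≤ ((d j₁ : ℤ) : WithBot ℤ) := hv₂ ▸ (hcol j₁ hj₁j₀).2.2.2
        have harith : d j₁ + (wdeg (prm m).2 : ℤ) ≤ deltaF f + δ₂ := by
          linarith [hw12, hsplit, hStot, hdF, hcase]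
        calc mdeg (f v₂) + mdeg (MvPolynomial.monomial (prm m).2 (1:R))
            ≤ ((d j₁ : ℤ) : WithBot ℤ) + ((wdeg (prm m).2 : ℤ) : WithBot ℤ) :=
              add_le_add hfv (mdeg_monomial_le _ _)
          _ = (((d j₁ + wdeg (prm m).2 : ℤ)) : WithBot ℤ) := by rw [← WithBot.coe_add]
          _ ≤ ((deltaF f + δ₂ : ℤ) : WithBot ℤ) := WithBot.coe_le_coe.2 harith

end KeyLemma
section Assembly

variable {R : Type*} [CommRing R] {n : ℕ}

/-- the bordered matrix of `ddetX`. -/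
def bmat (f : Fin n → MvPolynomial (Fin n) R)
    (Df : Fin n → Fin n → MvPolynomial (Fin n ⊕ Fin n) R)
    (F : MvPolynomial (Fin n) R) (DF : Fin n → MvPolynomial (Fin n ⊕ Fin n) R) :
    Matrix (Fin (n+1)) (Fin (n+1)) (MvPolynomial (Fin n ⊕ Fin n) R) :=
  Matrix.of fun k i : Fin (n + 1) =>
    if hk : (k : ℕ) < n then
      if hi : (i : ℕ) < n then Df ⟨i, hi⟩ ⟨k, hk⟩ else DF ⟨k, hk⟩
    else
      if hi : (i : ℕ) < n then toX (f ⟨i, hi⟩) else toX F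

lemma ddetX_eq_det (f : Fin n → MvPolynomial (Fin n) R) (Df F DF) :
    ddetX f Df F DF = (bmat f Df F DF).det := rfl

lemma bmat_cc (f : Fin n → MvPolynomial (Fin n) R) (Df F DF) (k i : Fin n) :
    bmat f Df F DF k.castSucc i.castSucc = Df i k := by
  simp [bmat, Fin.is_lt, Fin.eta]

lemma bmat_cl (f : Fin n → MvPolynomial (Fin n) R) (Df F DF) (k : Fin n) :
    bmat f Df F DF k.castSucc (Fin.last n) = DF k := by
  simp [bmat, Fin.is_lt, Fin.eta]

lemma bmat_lc (f : Fin n → MvPolynomial (Fin n) R) (Df F DF) (i : Fin n) :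
    bmat f Df F DF (Fin.last n) i.castSucc = toX (f i) := by
  simp [bmat, Fin.is_lt, Fin.eta]

lemma bmat_ll (f : Fin n → MvPolynomial (Fin n) R) (Df F DF) :
    bmat f Df F DF (Fin.last n) (Fin.last n) = toX F := by
  simp [bmat]

lemma det_split_col (A B : Matrix (Fin (n+1)) (Fin (n+1)) (MvPolynomial (Fin n ⊕ Fin n) R))
    (j₀ : Fin (n+1)) (h : ∀ r c, c ≠ j₀ → B r c = A r c) :
    B.det = (A.updateCol j₀ (fun r => B r j₀ - A r j₀)).det + A.det := by
  classical
  have hAB : B = A.updateCol j₀ (fun r => B r j₀) := by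
    apply Matrix.ext
    intro r c
    by_cases hc : c = j₀
    · subst hc
      rw [Matrix.updateCol_self]
    · rw [Matrix.updateCol_ne hc]
      exact h r c hc
  conv_lhs => rw [hAB]
  have hfun : (fun r => B r j₀)
      = (fun r => B r j₀ - A r j₀) + (fun r => A r j₀) := by
    funext r
    simp
  rw [hfun, Matrix.det_updateCol_add, Matrix.updateCol_eq_self]

/-- degree data for the columns -/
def dcol (f : Fin n → MvPolynomial (Fin n) R) (δ₁ δ₂ : ℤ) : Fin (n+1) → ℤ :=
  fun c => if h : c = Fin.last n then deltaF f + δ₁ + δ₂ + 1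
    else ((f (c.castPred h)).totalDegree : ℤ)

/-- polynomials labelling the columns -/
def gcol (f : Fin n → MvPolynomial (Fin n) R) (F : MvPolynomial (Fin n) R) :
    Fin (n+1) → MvPolynomial (Fin n) R :=
  fun c => if h : c = Fin.last n then F else f (c.castPred h)

lemma dcol_cast (f : Fin n → MvPolynomial (Fin n) R) (δ₁ δ₂ : ℤ) (v : Fin n) :
    dcol f δ₁ δ₂ v.castSucc = ((f v).totalDegree : ℤ) := by
  rw [dcol, dif_neg (Fin.castSucc_lt_last v).ne, Fin.castPred_castSucc]

lemma dcol_last (f : Fin n → MvPolynomial (Fin n) R) (δ₁ δ₂ : ℤ) :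
    dcol f δ₁ δ₂ (Fin.last n) = deltaF f + δ₁ + δ₂ + 1 := by
  rw [dcol, dif_pos rfl]

lemma gcol_cast (f : Fin n → MvPolynomial (Fin n) R) (F) (v : Fin n) :
    gcol f F v.castSucc = f v := by
  rw [gcol, dif_neg (Fin.castSucc_lt_last v).ne, Fin.castPred_castSucc]

lemma gcol_last (f : Fin n → MvPolynomial (Fin n) R) (F) :
    gcol f F (Fin.last n) = F := by
  rw [gcol, dif_pos rfl]

lemma mono_deg_le {P : MvPolynomial (Fin n ⊕ Fin n) R} {G : MvPolynomial (Fin n) R} {dG : ℤ}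
    (h : mdeg P + 1 ≤ mdeg G) (hG : mdeg G ≤ ((dG : ℤ) : WithBot ℤ)) :
    mdeg P ≤ ((dG - 1 : ℤ) : WithBot ℤ) :=
  wb_le_sub_one (le_trans h hG)

end Assembly
section Steps

variable {R : Type*} [CommRing R] {n : ℕ}

lemma stepF
    (f : Fin n → MvPolynomial (Fin n) R)
    (δ₁ δ₂ : ℤ) (hδ₁ : 0 ≤ δ₁) (hδ₂ : 0 ≤ δ₂)
    (L₁ L₂ : MvPolynomial (Fin n) R →ₗ[R] R)
    (hL₁ : Annuls L₁ (boundedSpan f ((deltaF f + δ₁ : ℤ) : WithBot ℤ)))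
    (hL₂ : Annuls L₂ (boundedSpan f ((deltaF f + δ₂ : ℤ) : WithBot ℤ)))
    (F : MvPolynomial (Fin n) R)
    (hF : mdeg F ≤ ((deltaF f + δ₁ + δ₂ + 1 : ℤ) : WithBot ℤ))
    (Df : Fin n → Fin n → MvPolynomial (Fin n ⊕ Fin n) R)
    (hDf : ∀ i, IsDiffDeriv (f i) (Df i) ∧ IsMonotonous (f i) (Df i))
    (DF DF2 : Fin n → MvPolynomial (Fin n ⊕ Fin n) R)
    (hDF : IsDiffDeriv F DF ∧ IsMonotonous F DF)
    (hDF2 : IsDiffDeriv F DF2 ∧ IsMonotonous F DF2) :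
    L₁ (applyY L₂ (ddetX f Df F DF)) = L₁ (applyY L₂ (ddetX f Df F DF2)) := by
  classical
  set A := bmat f Df F DF with hA
  set B := bmat f Df F DF2 with hB
  have hsame : ∀ r c, c ≠ Fin.last n → B r c = A r c := by
    intro r c hc
    obtain ⟨v, hv⟩ := Fin.exists_castSucc_eq.2 hc
    rw [← hv]
    induction r using Fin.lastCases with
    | last => rw [hB, hA, bmat_lc, bmat_lc]
    | cast k => rw [hB, hA, bmat_cc, bmat_cc]
  have hsplit := det_split_col A B (Fin.last n) hsame
  set Nd := A.updateCol (Fin.last n)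
    (fun r => B r (Fin.last n) - A r (Fin.last n)) with hNd
  have hcolval : ∀ r, Nd r (Fin.last n) = B r (Fin.last n) - A r (Fin.last n) := by
    intro r
    rw [hNd, Matrix.updateCol_self]
  have hvanish : L₁ (applyY L₂ Nd.det) = 0 := by
    apply key_vanish f δ₁ δ₂ hδ₁ hδ₂ L₁ L₂ hL₁ hL₂ Nd (Fin.last n)
      (dcol f δ₁ δ₂) (gcol f F)
    · rw [hcolval, hB, hA, bmat_ll, bmat_ll, sub_self]
    · have : ∀ k : Fin n, Nd k.castSucc (Fin.last n) = DF2 k - DF k := by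
        intro k
        rw [hcolval, hB, hA, bmat_cl, bmat_cl]
      rw [Finset.sum_congr rfl (fun k _ => by rw [this k])]
      have hexp : ∀ k : Fin n,
          (MvPolynomial.X (Sum.inl k) - MvPolynomial.X (Sum.inr k)) * (DF2 k - DF k)
          = (MvPolynomial.X (Sum.inl k) - MvPolynomial.X (Sum.inr k)) * DF2 k
            - (MvPolynomial.X (Sum.inl k) - MvPolynomial.X (Sum.inr k)) * DF k :=
        fun k => by ring
      rw [Finset.sum_congr rfl (fun k _ => hexp k), Finset.sum_sub_distrib,
        hDF2.1, hDF.1, sub_self]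
    · intro r
      rw [hcolval, hB, hA, bmat_cl, bmat_cl, dcol_last]
      have h2 : (deltaF f + δ₁ + δ₂ + 1 - 1 : ℤ) = deltaF f + δ₁ + δ₂ := by ring
      rw [h2]
      refine le_trans (mdeg_sub_le _ _) (max_le ?_ ?_)
      · have := mono_deg_le (hDF2.2 r) hF
        rw [show (deltaF f + δ₁ + δ₂ + 1 - 1 : ℤ) = deltaF f + δ₁ + δ₂ from by ring] at this
        exact this
      · have := mono_deg_le (hDF.2 r) hF
        rw [show (deltaF f + δ₁ + δ₂ + 1 - 1 : ℤ) = deltaF f + δ₁ + δ₂ from by ring] at this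
        exact this
    · intro c hc
      obtain ⟨v, hv⟩ := Fin.exists_castSucc_eq.2 hc
      have hNdc : ∀ r, Nd r c = A r c := fun r => by
        rw [hNd, Matrix.updateCol_ne hc]
      subst hv
      refine ⟨?_, ?_, ?_, ?_⟩
      · rw [hNdc, hA, bmat_lc, gcol_cast]
      · rw [Finset.sum_congr rfl (fun k _ => by rw [hNdc, hA, bmat_cc]), gcol_cast]
        exact (hDf v).1
      · intro r
        rw [hNdc, hA, bmat_cc, dcol_cast]
        exact mono_deg_le ((hDf v).2 r) (mdeg_le_totalDegree (f v))
      · rw [gcol_cast, dcol_cast]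
        exact mdeg_le_totalDegree (f v)
    · intro c _ hcl
      obtain ⟨v, hv⟩ := Fin.exists_castSucc_eq.2 hcl
      exact ⟨v, by rw [← hv, gcol_cast]⟩
    · refine le_of_eq ?_
      rw [Finset.sum_congr rfl (fun v _ => by rw [dcol_cast])]
      rfl
    · rw [dcol_last]
  rw [ddetX_eq_det, ddetX_eq_det, ← hA, ← hB, hsplit, applyY_add, map_add,
    hvanish, zero_add]

lemma stepf
    (f : Fin n → MvPolynomial (Fin n) R)
    (δ₁ δ₂ : ℤ) (hδ₁ : 0 ≤ δ₁) (hδ₂ : 0 ≤ δ₂)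
    (L₁ L₂ : MvPolynomial (Fin n) R →ₗ[R] R)
    (hL₁ : Annuls L₁ (boundedSpan f ((deltaF f + δ₁ : ℤ) : WithBot ℤ)))
    (hL₂ : Annuls L₂ (boundedSpan f ((deltaF f + δ₂ : ℤ) : WithBot ℤ)))
    (F : MvPolynomial (Fin n) R)
    (hF : mdeg F ≤ ((deltaF f + δ₁ + δ₂ + 1 : ℤ) : WithBot ℤ))
    (j : Fin n)
    (Df Df2 : Fin n → Fin n → MvPolynomial (Fin n ⊕ Fin n) R)
    (hDf : ∀ i, IsDiffDeriv (f i) (Df i) ∧ IsMonotonous (f i) (Df i))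
    (hDf2 : ∀ i, IsDiffDeriv (f i) (Df2 i) ∧ IsMonotonous (f i) (Df2 i))
    (hagree : ∀ i, i ≠ j → Df2 i = Df i)
    (DF : Fin n → MvPolynomial (Fin n ⊕ Fin n) R)
    (hDF : IsDiffDeriv F DF ∧ IsMonotonous F DF) :
    L₁ (applyY L₂ (ddetX f Df F DF)) = L₁ (applyY L₂ (ddetX f Df2 F DF)) := by
  classical
  set A := bmat f Df F DF with hA
  set B := bmat f Df2 F DF with hB
  have hsame : ∀ r c, c ≠ j.castSucc → B r c = A r c := by
    intro r c hc
    induction r using Fin.lastCases with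
    | last =>
      by_cases hcl : c = Fin.last n
      · rw [hcl, hB, hA, bmat_ll, bmat_ll]
      · obtain ⟨v, hv⟩ := Fin.exists_castSucc_eq.2 hcl
        rw [← hv, hB, hA, bmat_lc, bmat_lc]
    | cast k =>
      by_cases hcl : c = Fin.last n
      · rw [hcl, hB, hA, bmat_cl, bmat_cl]
      · obtain ⟨v, hv⟩ := Fin.exists_castSucc_eq.2 hcl
        have hvj : v ≠ j := by
          intro h
          exact hc (by rw [← hv, h])
        rw [← hv, hB, hA, bmat_cc, bmat_cc, hagree v hvj]
  have hsplit := det_split_col A B j.castSucc hsame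
  set Nd := A.updateCol j.castSucc
    (fun r => B r j.castSucc - A r j.castSucc) with hNd
  have hcolval : ∀ r, Nd r j.castSucc = B r j.castSucc - A r j.castSucc := by
    intro r
    rw [hNd, Matrix.updateCol_self]
  have hvanish : L₁ (applyY L₂ Nd.det) = 0 := by
    apply key_vanish f δ₁ δ₂ hδ₁ hδ₂ L₁ L₂ hL₁ hL₂ Nd j.castSucc
      (dcol f δ₁ δ₂) (gcol f F)
    · rw [hcolval, hB, hA, bmat_lc, bmat_lc, sub_self]
    · have : ∀ k : Fin n, Nd k.castSucc j.castSucc = Df2 j k - Df j k := by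
        intro k
        rw [hcolval, hB, hA, bmat_cc, bmat_cc]
      rw [Finset.sum_congr rfl (fun k _ => by rw [this k])]
      have hexp : ∀ k : Fin n,
          (MvPolynomial.X (Sum.inl k) - MvPolynomial.X (Sum.inr k)) * (Df2 j k - Df j k)
          = (MvPolynomial.X (Sum.inl k) - MvPolynomial.X (Sum.inr k)) * Df2 j k
            - (MvPolynomial.X (Sum.inl k) - MvPolynomial.X (Sum.inr k)) * Df j k :=
        fun k => by ring
      rw [Finset.sum_congr rfl (fun k _ => hexp k), Finset.sum_sub_distrib,
        (hDf2 j).1, (hDf j).1, sub_self]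
    · intro r
      rw [hcolval, hB, hA, bmat_cc, bmat_cc, dcol_cast]
      refine le_trans (mdeg_sub_le _ _) (max_le ?_ ?_)
      · exact mono_deg_le ((hDf2 j).2 r) (mdeg_le_totalDegree (f j))
      · exact mono_deg_le ((hDf j).2 r) (mdeg_le_totalDegree (f j))
    · intro c hc
      have hNdc : ∀ r, Nd r c = A r c := fun r => by
        rw [hNd, Matrix.updateCol_ne hc]
      by_cases hcl : c = Fin.last n
      · subst hcl
        refine ⟨?_, ?_, ?_, ?_⟩
        · rw [hNdc, hA, bmat_ll, gcol_last]
        · rw [Finset.sum_congr rfl (fun k _ => by rw [hNdc, hA, bmat_cl]), gcol_last]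
          exact hDF.1
        · intro r
          rw [hNdc, hA, bmat_cl, dcol_last]
          exact mono_deg_le (hDF.2 r) hF
        · rw [gcol_last, dcol_last]
          exact hF
      · obtain ⟨v, hv⟩ := Fin.exists_castSucc_eq.2 hcl
        subst hv
        refine ⟨?_, ?_, ?_, ?_⟩
        · rw [hNdc, hA, bmat_lc, gcol_cast]
        · rw [Finset.sum_congr rfl (fun k _ => by rw [hNdc, hA, bmat_cc]), gcol_cast]
          exact (hDf v).1
        · intro r
          rw [hNdc, hA, bmat_cc, dcol_cast]
          exact mono_deg_le ((hDf v).2 r) (mdeg_le_totalDegree (f v))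
        · rw [gcol_cast, dcol_cast]
          exact mdeg_le_totalDegree (f v)
    · intro c _ hcl
      obtain ⟨v, hv⟩ := Fin.exists_castSucc_eq.2 hcl
      exact ⟨v, by rw [← hv, gcol_cast]⟩
    · refine le_of_eq ?_
      rw [Finset.sum_congr rfl (fun v _ => by rw [dcol_cast])]
      rfl
    · rw [dcol_last]
  rw [ddetX_eq_det, ddetX_eq_det, ← hA, ← hB, hsplit, applyY_add, map_add,
    hvanish, zero_add]

end Steps

/-- Theorem 3.1: on polynomials of degree `≤ δ_f + δ₁ + δ₂ + 1`, the
extended functional `L₁(x_*).L₂(y_*).det‖∇f ∇F; f(x) F(x)‖` does not depend on the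
choices of the monotonous difference derivatives `∇fᵢ` and `∇F`. -/
theorem extension_independent_of_choices {R : Type*} [CommRing R] {n : ℕ}
    (f : Fin n → MvPolynomial (Fin n) R) (hf : ∀ i, (1 : WithBot ℤ) ≤ mdeg (f i))
    (δ₁ δ₂ : ℤ) (hδ₁ : 0 ≤ δ₁) (hδ₂ : 0 ≤ δ₂)
    (L₁ L₂ : MvPolynomial (Fin n) R →ₗ[R] R)
    (hL₁ : Annuls L₁ (boundedSpan f ((deltaF f + δ₁ : ℤ) : WithBot ℤ)))
    (hL₂ : Annuls L₂ (boundedSpan f ((deltaF f + δ₂ : ℤ) : WithBot ℤ)))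
    (F : MvPolynomial (Fin n) R)
    (hF : mdeg F ≤ ((deltaF f + δ₁ + δ₂ + 1 : ℤ) : WithBot ℤ))
    (Df' Df'' : Fin n → Fin n → MvPolynomial (Fin n ⊕ Fin n) R)
    (hDf' : ∀ i, IsDiffDeriv (f i) (Df' i) ∧ IsMonotonous (f i) (Df' i))
    (hDf'' : ∀ i, IsDiffDeriv (f i) (Df'' i) ∧ IsMonotonous (f i) (Df'' i))
    (DF' DF'' : Fin n → MvPolynomial (Fin n ⊕ Fin n) R)
    (hDF' : IsDiffDeriv F DF' ∧ IsMonotonous F DF')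
    (hDF'' : IsDiffDeriv F DF'' ∧ IsMonotonous F DF'') :
    L₁ (applyY L₂ (ddetX f Df' F DF')) = L₁ (applyY L₂ (ddetX f Df'' F DF'')) := by
  classical
  have h1 : L₁ (applyY L₂ (ddetX f Df' F DF')) = L₁ (applyY L₂ (ddetX f Df' F DF'')) :=
    stepF f δ₁ δ₂ hδ₁ hδ₂ L₁ L₂ hL₁ hL₂ F hF Df' hDf' DF' DF'' hDF' hDF''
  have h2 : ∀ s : Finset (Fin n),
      L₁ (applyY L₂ (ddetX f (fun i => if i ∈ s then Df'' i else Df' i) F DF''))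
        = L₁ (applyY L₂ (ddetX f Df' F DF'')) := by
    intro s
    induction s using Finset.induction with
    | empty => simp
    | insert a s' ha ih =>
      rw [← ih]
      apply stepf f δ₁ δ₂ hδ₁ hδ₂ L₁ L₂ hL₁ hL₂ F hF a
      · intro i
        by_cases hi : i ∈ insert a s' <;> simp only [hi, if_true, if_false]
        · exact hDf'' i
        · exact hDf' i
      · intro i
        by_cases hi : i ∈ s' <;> simp only [hi, if_true, if_false]
        · exact hDf'' i
        · exact hDf' i
      · intro i hij
        by_cases hi : i ∈ s'
        · rw [if_pos hi, if_pos (Finset.mem_insert_of_mem hi)]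
        · rw [if_neg hi, if_neg (fun h => hi ((Finset.mem_insert.1 h).resolve_left hij))]
      · exact hDF''
  have h3 := h2 Finset.univ
  have hmix : (fun i => if i ∈ (Finset.univ : Finset (Fin n)) then Df'' i else Df' i)
      = Df'' := by
    funext i
    simp
  rw [hmix] at h3
  rw [h1, ← h3]

end
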